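/- Let f : X → Y be an equivalence between continuous flows φ on X and ψ on Y on compact metric spaces (with reparametrization homeomorphisms h_x as in the previous context). If a Borel measure μ is expansive for φ, then the pushforward f_*μ is expansive for ψ. -/

import Mathlib

open MeasureTheory

/-- The dynamical ball `Γ_δ(x)` of a flow. -/
def Gamma {X : Type*} [MetricSpace X] (φ : ℝ → X → X) (δ : ℝ) (x : X) : Set X :=
  {y | ∃ h : ℝ → ℝ, Continuous h ∧ h 0 = 0 ∧ ∀ t : ℝ, dist (φ t x) (φ (h t) y) ≤ δ}

/-- If `f` is an equivalence between continuous flows `φ` and `ψ` on compact metric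
spaces and `μ` is expansive for `φ`, then `f_*μ` is expansive for `ψ`. -/
theorem pushforward_expansive_of_equivalence
    {X Y : Type*} [MetricSpace X] [CompactSpace X] [MeasurableSpace X] [BorelSpace X]
    [MetricSpace Y] [CompactSpace Y] [MeasurableSpace Y] [BorelSpace Y]
    (φ : ℝ → X → X) (ψ : ℝ → Y → Y)
    (hcφ : Continuous fun p : ℝ × X => φ p.1 p.2)
    (hzφ : ∀ x, φ 0 x = x)
    (haφ : ∀ s t x, φ t (φ s x) = φ (t + s) x)
    (hcψ : Continuous fun p : ℝ × Y => ψ p.1 p.2)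
    (hzψ : ∀ y, ψ 0 y = y)
    (haψ : ∀ s t y, ψ t (ψ s y) = ψ (t + s) y)
    (f : X ≃ₜ Y)
    (horb : ∀ x : X, f '' Set.range (fun t : ℝ => φ t x)
      = Set.range fun t : ℝ => ψ t (f x))
    (hrep : ∀ x : X, ∃ hx : ℝ ≃ₜ ℝ, hx 0 = 0 ∧
      ∀ t : ℝ, f.symm (ψ t (f x)) = φ (hx t) x)
    (μ : Measure X)
    (hexp : ∃ δ > 0, ∀ x : X, μ (Gamma φ δ x) = 0) :
    ∃ α > 0, ∀ z : Y, (Measure.map f μ) (Gamma ψ α z) = 0 := by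
  obtain ⟨δ, hδ, hμ⟩ := hexp
  have hu : UniformContinuous (f.symm : Y → X) :=
    CompactSpace.uniformContinuous_of_continuous f.symm.continuous
  obtain ⟨α, hα, hαδ⟩ := Metric.uniformContinuous_iff.mp hu δ hδ
  refine ⟨α / 2, by linarith, fun z => ?_⟩
  rw [(f.measurableEmbedding).map_apply]
  refine le_antisymm (le_trans (measure_mono ?_) (hμ (f.symm z)).le) zero_le
  intro x' hx'
  obtain ⟨h, hch, h0, hball⟩ := hx'
  obtain ⟨hx, hx0, hxeq⟩ := hrep (f.symm z)
  obtain ⟨hy, hy0, hyeq⟩ := hrep x'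
  have hxs0 : hx.symm 0 = 0 := by conv_lhs => rw [← hx0, hx.symm_apply_apply]
  refine ⟨fun t => hy (h (hx.symm t)), hy.continuous.comp (hch.comp hx.symm.continuous),
    by simp [hxs0, h0, hy0], fun t => ?_⟩
  have key : ∀ s : ℝ, dist (φ (hx s) (f.symm z)) (φ (hy (h s)) x') < δ := by
    intro s
    rw [← hxeq, ← hyeq, f.apply_symm_apply]
    exact hαδ (by simpa using lt_of_le_of_lt (hball s) (by linarith))
  have := key (hx.symm t)
  rw [hx.apply_symm_apply] at this
  exact this.le
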